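/- Let f : ℕ → ℝ be any function such that for every n ≥ 1, f(2n) > 0 and f(2n)^{2n−1} = c_{2n−1}(f(2n)) (i.e., f(2n) is the unique positive solution m_0(d) of m^{d−1} = c_{d−1}(m) for d = 2n). Then the sequence n ↦ f(2n)/n converges to 1/arcsinh(1) = 1/ln(1+√2) as n → ∞; equivalently, 2·m_0(d)/d → 1/arcsinh(1) as d → ∞ along even d. -/

import Mathlib

open Filter

/-- Shifted continuant numbers: `cseq m n = c_{n-1}(m)`, where `c_{-1} = 0`, `c_0 = 1`
and `c_k = c_{k-1} + m^2 c_{k-2}` for `k ≥ 1`. -/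
noncomputable def cseq (m : ℝ) : ℕ → ℝ
  | 0 => 0
  | 1 => 1
  | (n+2) => cseq m (n+1) + m ^ 2 * cseq m n

open Real in
lemma cseq_formula (m : ℝ) (k : ℕ) :
    cseq m k * Real.sqrt (1 + 4 * m ^ 2) =
      ((1 + Real.sqrt (1 + 4 * m ^ 2)) / 2) ^ k
        - ((1 - Real.sqrt (1 + 4 * m ^ 2)) / 2) ^ k := by
  set s := Real.sqrt (1 + 4 * m ^ 2) with hsdef
  have hs2 : s ^ 2 = 1 + 4 * m ^ 2 := Real.sq_sqrt (by positivity)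
  have hp : ((1 + s) / 2) ^ 2 = (1 + s) / 2 + m ^ 2 := by linear_combination hs2 / 4
  have hq : ((1 - s) / 2) ^ 2 = (1 - s) / 2 + m ^ 2 := by linear_combination hs2 / 4
  induction k using Nat.twoStepInduction with
  | zero => simp [cseq]
  | one => simp [cseq]; ring
  | more k ih1 ih2 =>
    have hdef : cseq m (k + 2) = cseq m (k + 1) + m ^ 2 * cseq m k := rfl
    have e1 : ((1 + s) / 2) ^ (k + 2)
        = ((1 + s) / 2) ^ (k + 1) + m ^ 2 * ((1 + s) / 2) ^ k := by
      calc ((1 + s) / 2) ^ (k + 2) = ((1 + s) / 2) ^ k * ((1 + s) / 2) ^ 2 := by ring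
        _ = ((1 + s) / 2) ^ k * ((1 + s) / 2 + m ^ 2) := by rw [hp]
        _ = _ := by ring
    have e2 : ((1 - s) / 2) ^ (k + 2)
        = ((1 - s) / 2) ^ (k + 1) + m ^ 2 * ((1 - s) / 2) ^ k := by
      calc ((1 - s) / 2) ^ (k + 2) = ((1 - s) / 2) ^ k * ((1 - s) / 2) ^ 2 := by ring
        _ = ((1 - s) / 2) ^ k * ((1 - s) / 2 + m ^ 2) := by rw [hq]
        _ = _ := by ring
    rw [hdef, e1, e2]
    linear_combination ih2 + m ^ 2 * ih1


theorem stmt18 (f : ℕ → ℝ)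
    (hf : ∀ n : ℕ, 1 ≤ n →
      0 < f (2 * n) ∧ (f (2 * n)) ^ (2 * n - 1) = cseq (f (2 * n)) (2 * n)) :
    Tendsto (fun n : ℕ => f (2 * n) / (n : ℝ)) atTop (nhds (1 / Real.arsinh 1)) := by
  set a : ℕ → ℝ := fun n => Real.arsinh (1 / (2 * f (2 * n))) with ha_def
  -- key identity
  have hkey : ∀ n : ℕ, 1 ≤ n → Real.cosh (a n) = Real.sinh ((2 * n : ℝ) * a n) := by
    intro n hn
    obtain ⟨hm, heq⟩ := hf n hn
    set m := f (2 * n) with hmdef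
    have hm0 : m ≠ 0 := ne_of_gt hm
    have hsinh : Real.sinh (a n) = 1 / (2 * m) := Real.sinh_arsinh _
    have hcosh2 : Real.cosh (a n) ^ 2 = 1 / (4 * m ^ 2) + 1 := by
      rw [Real.cosh_sq, hsinh]; field_simp; ring
    have hcoshpos := Real.cosh_pos (a n)
    set s := Real.sqrt (1 + 4 * m ^ 2) with hsdef
    have hs_eq : s = 2 * m * Real.cosh (a n) := by
      rw [hsdef, show (1 + 4 * m ^ 2) = (2 * m * Real.cosh (a n)) ^ 2 by
        rw [mul_pow, mul_pow, hcosh2]; field_simp; ring]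
      exact Real.sqrt_sq (by positivity)
    have hmsinh : m * Real.sinh (a n) = 1 / 2 := by rw [hsinh]; field_simp
    have hrp : (1 + s) / 2 = m * Real.exp (a n) := by
      rw [hs_eq, ← Real.cosh_add_sinh]; linarith [hmsinh]
    have hrm : (1 - s) / 2 = -(m * Real.exp (-(a n))) := by
      rw [hs_eq, ← Real.cosh_sub_sinh]; linarith [hmsinh]
    have hform := cseq_formula m (2 * n)
    rw [hrp, hrm, Even.neg_pow (even_two_mul n)] at hform
    have hexp1 : (m * Real.exp (a n)) ^ (2 * n) = m ^ (2 * n) * Real.exp ((2 * n : ℕ) * a n) := by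
      rw [mul_pow, Real.exp_nat_mul]
    have hexp2 : (m * Real.exp (-(a n))) ^ (2 * n)
        = m ^ (2 * n) * Real.exp (-(((2 * n : ℕ) : ℝ) * a n)) := by
      rw [mul_pow, ← Real.exp_nat_mul]; ring_nf
    rw [hexp1, hexp2, ← heq] at hform
    have hpow : m ^ (2 * n - 1) * m = m ^ (2 * n) := by
      rw [← pow_succ]; congr 1; omega
    have hsinh2 : Real.sinh (((2 * n : ℕ) : ℝ) * a n)
        = (Real.exp (((2 * n : ℕ) : ℝ) * a n) - Real.exp (-(((2 * n : ℕ) : ℝ) * a n))) / 2 :=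
      Real.sinh_eq _
    have hmpow : (0 : ℝ) < m ^ (2 * n) := pow_pos hm _
    have key : m ^ (2 * n) * Real.cosh (a n) = m ^ (2 * n) * Real.sinh (((2 * n : ℕ) : ℝ) * a n) := by
      rw [hsinh2]
      have : m ^ (2 * n - 1) * s = m ^ (2 * n) * Real.exp (((2 * n : ℕ) : ℝ) * a n)
          - m ^ (2 * n) * Real.exp (-(((2 * n : ℕ) : ℝ) * a n)) := hform
      rw [hs_eq] at this
      nlinarith [this, hpow]
    have := mul_left_cancel₀ (ne_of_gt hmpow) key
    rw [this]; norm_num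
  -- positivity of a
  have ha_pos : ∀ n : ℕ, 1 ≤ n → 0 < a n := by
    intro n hn
    have hm := (hf n hn).1
    have : (0:ℝ) < 1 / (2 * f (2 * n)) := by positivity
    calc (0:ℝ) = Real.arsinh 0 := Real.arsinh_zero.symm
      _ < a n := Real.arsinh_lt_arsinh.2 this
  -- sinh (a n) ≤ 1/2 and cosh (a n) ≤ 3/2, hence 2n * a n ≤ arsinh (3/2)
  have hbound : ∀ n : ℕ, 1 ≤ n → (2 * n : ℝ) * a n ≤ Real.arsinh (3 / 2) := by
    intro n hn
    have hk := hkey n hn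
    have hap := ha_pos n hn
    have h2a : Real.sinh (2 * a n) ≤ Real.sinh ((2 * n : ℝ) * a n) := by
      apply Real.sinh_le_sinh.2
      have : (1:ℝ) ≤ (n:ℝ) := by exact_mod_cast hn
      nlinarith
    rw [← hk, Real.sinh_two_mul] at h2a
    have hcp := Real.cosh_pos (a n)
    have hsle : Real.sinh (a n) ≤ 1 / 2 := by nlinarith
    have hs0 : 0 < Real.sinh (a n) := by
      calc (0:ℝ) = Real.sinh 0 := Real.sinh_zero.symm
        _ < Real.sinh (a n) := Real.sinh_lt_sinh.2 hap
    have hcle : Real.cosh (a n) ≤ 3 / 2 := by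
      nlinarith [Real.cosh_sq (a n)]
    have h2na : (2 * n : ℝ) * a n = Real.arsinh (Real.cosh (a n)) := by
      rw [hk, Real.arsinh_sinh]
    rw [h2na]
    exact Real.arsinh_le_arsinh.2 hcle
  -- a n → 0
  have ha_lim : Tendsto a atTop (nhds 0) := by
    apply tendsto_of_tendsto_of_tendsto_of_le_of_le' tendsto_const_nhds
      (tendsto_const_div_atTop_nhds_zero_nat (Real.arsinh (3 / 2) / 2))
    · filter_upwards [eventually_ge_atTop 1] with n hn
      exact (ha_pos n hn).le
    · filter_upwards [eventually_ge_atTop 1] with n hn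
      have hb := hbound n hn
      have hn0 : (0:ℝ) < (n:ℝ) := by exact_mod_cast hn
      rw [div_div, le_div_iff₀ (by positivity)]
      nlinarith
  -- 2n a n → arsinh 1
  have h2na_lim : Tendsto (fun n : ℕ => (2 * n : ℝ) * a n) atTop (nhds (Real.arsinh 1)) := by
    have hcont : Tendsto (fun n : ℕ => Real.arsinh (Real.cosh (a n))) atTop
        (nhds (Real.arsinh 1)) := by
      have := ((Real.continuous_arsinh.comp Real.continuous_cosh).continuousAt
        (x := (0:ℝ))).tendsto.comp ha_lim
      simpa [Real.cosh_zero, Function.comp_def] using this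
    apply hcont.congr'
    filter_upwards [eventually_ge_atTop 1] with n hn
    rw [hkey n hn, Real.arsinh_sinh]
  -- sinh (a n) / a n → 1
  have hslope : Tendsto (fun n : ℕ => Real.sinh (a n) / a n) atTop (nhds 1) := by
    have hd := Real.hasDerivAt_sinh 0
    rw [hasDerivAt_iff_tendsto_slope] at hd
    have ha' : Tendsto a atTop (nhdsWithin 0 {(0:ℝ)}ᶜ) := by
      apply tendsto_nhdsWithin_of_tendsto_nhds_of_eventually_within _ ha_lim
      filter_upwards [eventually_ge_atTop 1] with n hn
      exact (ha_pos n hn).ne'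
    have := hd.comp ha'
    rw [Real.cosh_zero] at this
    apply this.congr
    intro n
    simp [slope_def_field, Real.sinh_zero]
  -- 2 n sinh (a n) → arsinh 1
  have hS : Tendsto (fun n : ℕ => (2 * n : ℝ) * Real.sinh (a n)) atTop
      (nhds (Real.arsinh 1)) := by
    have := h2na_lim.mul hslope
    rw [mul_one] at this
    apply this.congr'
    filter_upwards [eventually_ge_atTop 1] with n hn
    have := (ha_pos n hn).ne'
    field_simp
  -- conclude
  have hL0 : Real.arsinh 1 ≠ 0 := by
    have : (0:ℝ) < Real.arsinh 1 := by
      calc (0:ℝ) = Real.arsinh 0 := Real.arsinh_zero.symm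
        _ < Real.arsinh 1 := Real.arsinh_lt_arsinh.2 one_pos
    exact this.ne'
  have hinv := hS.inv₀ hL0
  rw [show (Real.arsinh 1)⁻¹ = 1 / Real.arsinh 1 by rw [one_div]] at hinv
  apply hinv.congr'
  filter_upwards [eventually_ge_atTop 1] with n hn
  have hm := (hf n hn).1
  have hsinh : Real.sinh (a n) = 1 / (2 * f (2 * n)) := Real.sinh_arsinh _
  have hn0 : (0:ℝ) < (n:ℝ) := by exact_mod_cast hn
  rw [hsinh]
  field_simp
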